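/- Let 𝒜 be a compact metric space, N ≥ 1, and for each i ∈ {1,…,N} let Jⁱ : 𝒜^N → ℝ be continuous. Suppose (α^k)_{k ≥ 0} is a sequence in 𝒜^N such that for every k and every i, the i-th coordinate α^{i,k+1} minimizes β ↦ Jⁱ(β, α^{−i,k}) over 𝒜 (best response to the others' previous strategies), and suppose α^k converges to some α^∞ ∈ 𝒜^N. Then α^∞ is a Nash equilibrium: for every i and every β ∈ 𝒜, Jⁱ(α^∞) ≤ Jⁱ(β, α^{−i,∞}). -/

import Mathlib

open Filter

/-- Stability of fictitious play: if the sequence of simultaneous best responses converges,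
then (by continuity of the cost functionals) the limit is a Nash equilibrium of the
N-player game. -/
theorem stmt17 {𝒜 : Type*} [MetricSpace 𝒜] [CompactSpace 𝒜]
    (N : ℕ) (hN : 1 ≤ N)
    (J : Fin N → (Fin N → 𝒜) → ℝ) (hJ : ∀ i, Continuous (J i))
    (αseq : ℕ → Fin N → 𝒜)
    (hbr : ∀ k (i : Fin N) (β : 𝒜),
      J i (Function.update (αseq k) i (αseq (k + 1) i))
        ≤ J i (Function.update (αseq k) i β))
    (αlim : Fin N → 𝒜) (hlim : Tendsto αseq atTop (nhds αlim)) :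
    ∀ (i : Fin N) (β : 𝒜), J i αlim ≤ J i (Function.update αlim i β) := by
  intro i β
  have hlim' : Tendsto (fun k => αseq (k + 1)) atTop (nhds αlim) :=
    hlim.comp (tendsto_add_atTop_nat 1)
  have hupd : Continuous (fun p : (Fin N → 𝒜) × 𝒜 => Function.update p.1 i p.2) := by
    apply continuous_pi
    intro j
    by_cases h : j = i
    · subst h
      simpa using continuous_snd
    · simpa [Function.update_of_ne h, Function.comp_def] using (continuous_apply j).comp continuous_fst
  have h1 : Tendsto (fun k => J i (Function.update (αseq k) i (αseq (k + 1) i)))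
      atTop (nhds (J i αlim)) := by
    have := ((hJ i).comp hupd).tendsto (αlim, αlim i)
    have h2 : Tendsto (fun k => ((αseq k, αseq (k + 1) i) : (Fin N → 𝒜) × 𝒜))
        atTop (nhds (αlim, αlim i)) :=
      Tendsto.prodMk_nhds hlim ((continuous_apply i).continuousAt.tendsto.comp hlim')
    have := this.comp h2
    simpa [Function.comp_def, Function.update_eq_self] using this
  have h3 : Tendsto (fun k => J i (Function.update (αseq k) i β))
      atTop (nhds (J i (Function.update αlim i β))) := by
    have := ((hJ i).comp hupd).tendsto (αlim, β)
    have h2 : Tendsto (fun k => ((αseq k, β) : (Fin N → 𝒜) × 𝒜))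
        atTop (nhds (αlim, β)) := Tendsto.prodMk_nhds hlim tendsto_const_nhds
    simpa [Function.comp_def] using this.comp h2
  exact le_of_tendsto_of_tendsto' h1 h3 (fun k => hbr k i β)
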